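/- Let μ be a probability measure on a measurable space X, let U ⊆ X be a measurable set with μ(U) ≥ 1/2, and let μ̄ be the normalized restriction of μ to U, μ̄(A) = μ(A ∩ U)/μ(U). Let g : X → ℝ be a bounded measurable function vanishing outside U, let Γ : X → [0,∞) be measurable, and suppose there is λ > 0 with λ·Var(g; μ̄) ≤ ∫ Γ dμ̄. Then Var(g; μ) ≤ (1/λ)·∫ Γ dμ + 2·(1 − μ(U))·‖g‖_∞². -/

import Mathlib

open MeasureTheory ENNReal

/-- The variance of a real-valued function `G` with respect to a measure `ν`:
`Var(G; ν) = ∫ G² dν − (∫ G dν)²`. -/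
noncomputable def var {X : Type*} [MeasurableSpace X] (ν : Measure X) (G : X → ℝ) : ℝ :=
  (∫ x, (G x) ^ 2 ∂ν) - (∫ x, G x ∂ν) ^ 2

set_option maxHeartbeats 1000000 in
/-- A spectral-gap bound `λ·Var(g; μ̄) ≤ ∫ Γ dμ̄` for the normalized restriction
`μ̄ = μ(·∩U)/μ(U)` of `μ` to a set `U` with `μ(U) ≥ 1/2`, applied to a bounded
measurable `g` vanishing outside `U`, yields the defective variance bound
`Var(g; μ) ≤ (1/λ)·∫ Γ dμ + 2·(1 − μ(U))·‖g‖_∞²`. -/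
theorem variance_from_local_gap {X : Type*} [MeasurableSpace X] (μ : Measure X)
    [IsProbabilityMeasure μ] (U : Set X) (hU : MeasurableSet U)
    (hUhalf : (1 : ℝ≥0∞) / 2 ≤ μ U)
    (g : X → ℝ) (hg : Measurable g) (hgbdd : ∃ C : ℝ, ∀ x, |g x| ≤ C)
    (hsupp : ∀ x, x ∉ U → g x = 0)
    (Γ : X → ℝ) (hΓ : Measurable Γ) (hΓ0 : ∀ x, 0 ≤ Γ x) (hΓint : Integrable Γ μ)
    (lam : ℝ) (hlam : 0 < lam)
    (hgap : lam * var ((μ U)⁻¹ • μ.restrict U) g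
      ≤ ∫ x, Γ x ∂((μ U)⁻¹ • μ.restrict U)) :
    var μ g ≤ (1 / lam) * (∫ x, Γ x ∂μ)
      + 2 * (1 - (μ U).toReal) * (eLpNormEssSup g μ).toReal ^ 2 := by
  obtain ⟨C, hC⟩ := hgbdd
  have hμU_ne : μ U ≠ 0 := by
    intro h; rw [h] at hUhalf; simp [ENNReal.div_eq_top] at hUhalf
  have hμUfin : μ U ≠ ⊤ := (measure_lt_top μ U).ne
  set m := (μ U).toReal with hm
  have hm_pos : (0:ℝ) < m := ENNReal.toReal_pos hμU_ne hμUfin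
  have hm_half : (1:ℝ)/2 ≤ m := by
    have := ENNReal.toReal_mono hμUfin hUhalf
    simpa using this
  have hm_le1 : m ≤ 1 := by
    have := ENNReal.toReal_mono (by simp) (prob_le_one (μ := μ) (s := U))
    simpa using this
  -- integrability of g and g²
  have hgi : Integrable g μ :=
    (integrable_const C).mono' hg.aestronglyMeasurable (ae_of_all _ fun x => by
      simpa using hC x)
  have hg2i : Integrable (fun x => g x ^ 2) μ :=
    (integrable_const (C^2)).mono' (hg.pow_const 2).aestronglyMeasurable
      (ae_of_all _ fun x => by
        have h := hC x
        have h0 : (0:ℝ) ≤ |g x| := abs_nonneg _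
        have : |g x ^ 2| ≤ C ^ 2 := by rw [abs_pow]; nlinarith
        simpa using this)
  set A := ∫ x, g x ∂μ with hA
  set B := ∫ x, g x ^ 2 ∂μ with hB
  set G := ∫ x, Γ x ∂μ with hG
  set GU := ∫ x in U, Γ x ∂μ with hGU
  set K := (eLpNormEssSup g μ).toReal with hK
  -- rewriting integrals over the normalized restricted measure
  have hinv : ((μ U)⁻¹).toReal = m⁻¹ := by rw [ENNReal.toReal_inv]
  have hIg : ∫ x, g x ∂((μ U)⁻¹ • μ.restrict U) = m⁻¹ * A := by
    rw [integral_smul_measure, hinv, setIntegral_eq_integral_of_forall_compl_eq_zero hsupp]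
    simp [hA]
  have hIg2 : ∫ x, g x ^ 2 ∂((μ U)⁻¹ • μ.restrict U) = m⁻¹ * B := by
    rw [integral_smul_measure, hinv,
      setIntegral_eq_integral_of_forall_compl_eq_zero (fun x hx => by simp [hsupp x hx])]
    simp [hB]
  have hIΓ : ∫ x, Γ x ∂((μ U)⁻¹ • μ.restrict U) = m⁻¹ * GU := by
    rw [integral_smul_measure, hinv]; simp [hGU]
  have hgap' : lam * (m⁻¹ * B - (m⁻¹ * A) ^ 2) ≤ m⁻¹ * GU := by
    rw [var, hIg, hIg2, hIΓ] at hgap; exact hgap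
  -- K bounds
  have hKfin : eLpNormEssSup g μ ≠ ⊤ := by
    refine ne_top_of_le_ne_top ofReal_ne_top (eLpNormEssSup_le_of_ae_bound (C := C) ?_)
    exact ae_of_all _ fun x => by simpa using hC x
  have hK0 : 0 ≤ K := ENNReal.toReal_nonneg
  have hgK : ∀ᵐ x ∂μ, |g x| ≤ K := by
    filter_upwards [ae_le_eLpNormEssSup (f := g) (μ := μ)] with x hx
    have h2 : ((‖g x‖₊ : ℝ≥0∞)).toReal ≤ K := ENNReal.toReal_mono hKfin hx
    simpa [Real.norm_eq_abs] using h2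
  have hAK : |A| ≤ K := by
    calc |A| ≤ ∫ x, |g x| ∂μ := by
          simpa [Real.norm_eq_abs] using norm_integral_le_integral_norm (μ := μ) g
      _ ≤ ∫ x, K ∂μ := integral_mono_ae hgi.abs (integrable_const K) hgK
      _ = K := by simp
  have hA2K : A ^ 2 ≤ K ^ 2 := by nlinarith [abs_nonneg A, sq_abs A]
  have hGUle : GU ≤ G := setIntegral_le_integral hΓint (ae_of_all _ hΓ0)
  -- main algebra
  have hm0 : m ≠ 0 := hm_pos.ne'
  have e1 : m^2 * (lam * (m⁻¹ * B - (m⁻¹ * A)^2)) = lam * (m*B - A^2) := by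
    field_simp
  have e2 : m^2 * (m⁻¹ * GU) = m * GU := by field_simp
  have h1 : lam * (m*B - A^2) ≤ m * GU := by
    rw [← e1, ← e2]; exact mul_le_mul_of_nonneg_left hgap' (sq_nonneg m)
  have hGUle2 : m * GU ≤ m * G := mul_le_mul_of_nonneg_left hGUle hm_pos.le
  have ht : (0:ℝ) ≤ lam * (1 - m) := mul_nonneg hlam.le (by linarith)
  have hterm : (0:ℝ) ≤ lam * (1 - m) * (2*m - 1) * K^2 :=
    mul_nonneg (mul_nonneg ht (by linarith)) (sq_nonneg K)
  have hfinal : lam * m * (B - A^2) ≤ m * G + 2 * lam * m * (1-m) * K^2 := by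
    nlinarith [h1, hGUle2, mul_le_mul_of_nonneg_left hA2K ht, hterm]
  have hlm : (0:ℝ) < lam * m := mul_pos hlam hm_pos
  rw [var,
    show (∫ x, g x ^ 2 ∂μ) - (∫ x, g x ∂μ)^2 = B - A^2 from rfl,
    show (1/lam)*G + 2*(1-m)*K^2 = (m*G + 2*lam*m*(1-m)*K^2)/(lam*m) by
      field_simp,
    le_div_iff₀ hlm]
  nlinarith [hfinal]
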